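/- For any real a, with θ(a) = (2 + a - √(4 + a²))/(2a) for a ≠ 0 and θ(0) = 1/2, it holds that 1/θ(a)² + 1/(1-θ(a))² ≥ a² + 2|a|, and in particular ≥ a². -/
import Mathlib

open Real

theorem barrier_hessian_lower_bound_one_sided (a : ℝ) :
    let θ : ℝ := if a = 0 then 1 / 2 else (2 + a - Real.sqrt (4 + a ^ 2)) / (2 * a)
    a ^ 2 + 2 * |a| ≤ 1 / θ ^ 2 + 1 / (1 - θ) ^ 2 ∧
    a ^ 2 ≤ 1 / θ ^ 2 + 1 / (1 - θ) ^ 2 := by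
  intro θ
  by_cases ha : a = 0
  · have hθ : θ = 1 / 2 := by simp [θ, ha]
    rw [hθ]; subst ha
    norm_num
  · have hθ : θ = (2 + a - Real.sqrt (4 + a ^ 2)) / (2 * a) := by simp [θ, ha]
    set s := Real.sqrt (4 + a ^ 2) with hsdef
    have hs0 : (0:ℝ) ≤ s := Real.sqrt_nonneg _
    have hs : s ^ 2 = 4 + a ^ 2 := Real.sq_sqrt (by positivity)
    have hs2 : 2 < s := by
      nlinarith [sq_abs a, abs_pos.mpr ha]
    have hsa : |a| ≤ s := by
      nlinarith [sq_abs a, abs_nonneg a]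
    have h1 : 2 + a - s ≠ 0 := by
      intro h
      have : (2 + a - s) * (2 + a + s) = 4 * a := by nlinarith
      rw [h] at this; simp at this; exact ha this
    have h2 : a - 2 + s ≠ 0 := by
      intro h
      have : (a - 2 + s) * (-(a - 2) + s) = 4 * a := by nlinarith
      rw [h] at this; simp at this; exact ha this
    have hθne : θ ≠ 0 := by
      rw [hθ]
      exact div_ne_zero h1 (by simpa using ha)
    have h1θ : 1 - θ = (a - 2 + s) / (2 * a) := by
      rw [hθ]; field_simp; ring
    have h1θne : 1 - θ ≠ 0 := by
      rw [h1θ]; exact div_ne_zero h2 (by simpa using ha)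
    have key : 1 / θ ^ 2 + 1 / (1 - θ) ^ 2 = a ^ 2 + 2 * s + 4 := by
      rw [h1θ, hθ]
      have ha2 : (2 : ℝ) * a ≠ 0 := by simpa using ha
      field_simp
      linear_combination (a^4 - 16*a^2 + 16 + (10*a^2 - 24)*s + (12 - a^2)*s^2 - 2*s^3) * hs
    constructor
    · rw [key]; nlinarith
    · rw [key]; nlinarith [abs_nonneg a]
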